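/- General sufficient reasons are exactly the variable-minimal prime implicants of the general reason: for an instance I in class Δ, a term τ is a general sufficient reason for the decision on I if and only if τ is a prime implicant of ⊓I·Δ that is variable-minimal among the prime implicants of ⊓I·Δ. -/

import Mathlib

open scoped Classical

/-- Formulas over finite-domain variables: each variable `X : V` has domain `D X`.
A literal of `X` is (intended to be) a nonempty proper subset of `D X`'s states. -/
inductive Form (V : Type) (D : V → Type) : Type where
  | top : Form V D
  | bot : Form V D
  | lit : (X : V) → Set (D X) → Form V D
  | neg : Form V D → Form V D
  | and : Form V D → Form V D → Form V D
  | or : Form V D → Form V D → Form V D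

namespace Form

variable {V : Type} {D : V → Type}

/-- Satisfaction of a formula by a world. -/
def sat (w : ∀ X, D X) : Form V D → Prop
  | top => True
  | bot => False
  | lit X s => w X ∈ s
  | neg φ => ¬ sat w φ
  | and φ ψ => sat w φ ∧ sat w ψ
  | or φ ψ => sat w φ ∨ sat w ψ

/-- Conditioning `Δ|x` of a formula on state `x` of variable `X`: each `X`-literal
`ℓ` is replaced by `⊤` if `x ∈ ℓ` and by `⊥` otherwise. -/
noncomputable def cond (X : V) (x : D X) : Form V D → Form V D
  | top => top
  | bot => bot
  | lit Y s => if h : X = Y then (if h ▸ x ∈ s then top else bot) else lit Y s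
  | neg φ => neg (cond X x φ)
  | and φ ψ => and (cond X x φ) (cond X x ψ)
  | or φ ψ => or (cond X x φ) (cond X x ψ)

/-- The selection operator `⊓x·Δ := (Δ|x) ∧ Δ`. -/
noncomputable def sel (X : V) (x : D X) (Δ : Form V D) : Form V D :=
  and (cond X x Δ) Δ

/-- Logical equivalence of formulas (same models). -/
def equiv (φ ψ : Form V D) : Prop := ∀ w, sat w φ ↔ sat w ψ

/-- Variable `X` occurs (appears) in the formula. -/
def occurs (X : V) : Form V D → Prop
  | top => False
  | bot => False
  | lit Y _ => Y = X
  | neg φ => occurs X φ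
  | and φ ψ => occurs X φ ∨ occurs X ψ
  | or φ ψ => occurs X φ ∨ occurs X ψ

/-- NNF: negation-free, and every literal is a nonempty proper subset of states. -/
def isNNF : Form V D → Prop
  | top => True
  | bot => True
  | lit _ s => s.Nonempty ∧ s ≠ Set.univ
  | neg _ => False
  | and φ ψ => isNNF φ ∧ isNNF ψ
  | or φ ψ => isNNF φ ∧ isNNF ψ

/-- The `X`-literal `s` occurs in the formula. -/
def litOccurs (X : V) (s : Set (D X)) : Form V D → Prop
  | top => False
  | bot => False
  | lit Y t => ∃ h : Y = X, h ▸ t = s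
  | neg φ => litOccurs X s φ
  | and φ ψ => litOccurs X s φ ∨ litOccurs X s ψ
  | or φ ψ => litOccurs X s φ ∨ litOccurs X s ψ

/-- Every literal in the formula is implied by the instance `I`
(i.e., contains `I`'s state of its variable). -/
def litsImp (I : ∀ X, D X) : Form V D → Prop
  | top => True
  | bot => True
  | lit X s => I X ∈ s
  | neg φ => litsImp I φ
  | and φ ψ => litsImp I φ ∧ litsImp I ψ
  | or φ ψ => litsImp I φ ∧ litsImp I ψ

/-- Iterated selection `⊓` over a list of variables, using states from `v`. -/
noncomputable def selList (v : ∀ X, D X) : List V → Form V D → Form V D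
  | [], Δ => Δ
  | X :: L, Δ => sel X (v X) (selList v L Δ)

/-- The general reason `⊓I·Δ`: selection applied for all states of instance `I`. -/
noncomputable def selAll [Fintype V] (I : ∀ X, D X) (Δ : Form V D) : Form V D :=
  selList I (Finset.univ : Finset V).toList Δ

noncomputable def listAnd : List (Form V D) → Form V D
  | [] => top
  | φ :: L => and φ (listAnd L)

/-- Universal literal quantification `∀x·Δ := (Δ|x) ∧ ⋀_{y ≠ x} (x ∨ Δ|y)`. -/
noncomputable def uq (X : V) [Fintype (D X)] (x : D X) (Δ : Form V D) : Form V D :=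
  letI : DecidableEq (D X) := fun _ _ => Classical.propDecidable _
  and (cond X x Δ)
    (listAnd ((((Finset.univ : Finset (D X)).erase x).toList).map
      (fun y => or (lit X ({x} : Set (D X))) (cond X y Δ))))

/-- Iterated universal literal quantification over a list of variables. -/
noncomputable def uqList [∀ X, Fintype (D X)] (v : ∀ X, D X) : List V → Form V D → Form V D
  | [], Δ => Δ
  | X :: L, Δ => uq X (v X) (uqList v L Δ)

/-- The complete reason `∀I·Δ`. -/
noncomputable def uqAll [Fintype V] [∀ X, Fintype (D X)] (I : ∀ X, D X) (Δ : Form V D) :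
    Form V D :=
  uqList I (Finset.univ : Finset V).toList Δ

end Form

/-- A term: a conjunction of literals over distinct variables. Variable `X` is
mentioned iff `lits X ≠ univ`; each literal is nonempty (terms are consistent). -/
structure MvTerm (V : Type) (D : V → Type) : Type where
  lits : ∀ X, Set (D X)
  nonempty : ∀ X, (lits X).Nonempty

/-- A clause: a disjunction of literals over distinct variables. Variable `X` is
mentioned iff `lits X ≠ ∅`; each literal is proper (clauses are never valid). -/
structure MvClause (V : Type) (D : V → Type) : Type where
  lits : ∀ X, Set (D X)
  proper : ∀ X, lits X ≠ Set.univ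

namespace MvTerm

variable {V : Type} {D : V → Type}

def tsat (w : ∀ X, D X) (τ : MvTerm V D) : Prop := ∀ X, w X ∈ τ.lits X

def vars (τ : MvTerm V D) : Set V := {X | τ.lits X ≠ Set.univ}

/-- A simple term assigns a single state to each of its variables. -/
def simple (τ : MvTerm V D) : Prop :=
  ∀ X, τ.lits X ≠ Set.univ → ∃ x, τ.lits X = ({x} : Set (D X))

end MvTerm

namespace MvClause

variable {V : Type} {D : V → Type}

def csat (w : ∀ X, D X) (σ : MvClause V D) : Prop := ∃ X, w X ∈ σ.lits X

def vars (σ : MvClause V D) : Set V := {X | σ.lits X ≠ (∅ : Set (D X))}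

/-- A simple clause: all its literals are single states. -/
def simple (σ : MvClause V D) : Prop :=
  ∀ X, σ.lits X ≠ (∅ : Set (D X)) → ∃ x, σ.lits X = ({x} : Set (D X))

end MvClause

section PrimeDefs

variable {V : Type} {D : V → Type}

def termImp (τ τ' : MvTerm V D) : Prop := ∀ w, τ.tsat w → τ'.tsat w

def clauseImp (σ σ' : MvClause V D) : Prop := ∀ w, σ.csat w → σ'.csat w

/-- A prime implicant of the set of worlds `M`: a ⊨-maximal term implying `M`. -/
def isPrimeImplicantOf (M : (∀ X, D X) → Prop) (τ : MvTerm V D) : Prop :=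
  (∀ w, τ.tsat w → M w) ∧
  ∀ τ' : MvTerm V D, (∀ w, τ'.tsat w → M w) → termImp τ τ' → τ' = τ

/-- A prime implicate of the set of worlds `M`: a ⊨-minimal clause implied by `M`. -/
def isPrimeImplicateOf (M : (∀ X, D X) → Prop) (σ : MvClause V D) : Prop :=
  (∀ w, M w → σ.csat w) ∧
  ∀ σ' : MvClause V D, (∀ w, M w → σ'.csat w) → clauseImp σ' σ → σ' = σ

/-- Remove subsumed terms: delete any term strictly implied by another in the set. -/
def removeSubsumedT (S : Set (MvTerm V D)) : Set (MvTerm V D) :=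
  {τ ∈ S | ¬ ∃ τ' ∈ S, τ' ≠ τ ∧ termImp τ τ'}

/-- Remove subsumed clauses: delete any clause strictly implying another in the set. -/
def removeSubsumedC (S : Set (MvClause V D)) : Set (MvClause V D) :=
  {σ ∈ S | ¬ ∃ σ' ∈ S, σ' ≠ σ ∧ clauseImp σ' σ}

end PrimeDefs

section Reasons

variable {V : Type} {D : V → Type}

/-- Instance `I` implies (satisfies) term `τ`. -/
def instEntailsT (I : ∀ X, D X) (τ : MvTerm V D) : Prop := MvTerm.tsat I τ

/-- Term `τ` implies formula `Δ`. -/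
def termImpF (τ : MvTerm V D) (Δ : Form V D) : Prop :=
  ∀ w, MvTerm.tsat w τ → Form.sat w Δ

/-- `τ` is a weakest term with `I ⊨ τ ⊨ Δ`. -/
def weakestTermFor (I : ∀ X, D X) (Δ : Form V D) (τ : MvTerm V D) : Prop :=
  instEntailsT I τ ∧ termImpF τ Δ ∧
  ∀ τ' : MvTerm V D, instEntailsT I τ' → termImpF τ' Δ → termImp τ τ' → τ' = τ

/-- A sufficient reason: a weakest simple term `τ` with `I ⊨ τ ⊨ Δ`. -/
def isSR (I : ∀ X, D X) (Δ : Form V D) (τ : MvTerm V D) : Prop :=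
  MvTerm.simple τ ∧ instEntailsT I τ ∧ termImpF τ Δ ∧
  ∀ τ' : MvTerm V D, MvTerm.simple τ' → instEntailsT I τ' → termImpF τ' Δ →
    termImp τ τ' → τ' = τ

/-- A general sufficient reason: a weakest term with `I ⊨ τ ⊨ Δ` that is
variable-minimal among such weakest terms. -/
def isGSR (I : ∀ X, D X) (Δ : Form V D) (τ : MvTerm V D) : Prop :=
  weakestTermFor I Δ τ ∧
  ¬ ∃ τ' : MvTerm V D, weakestTermFor I Δ τ' ∧ MvTerm.vars τ' ⊂ MvTerm.vars τ

/-- `I ⊓ τ'`: the smallest subterm of `I` that implies `τ'` (the conjunction of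
`I`'s states on the variables mentioned by `τ'`), for `I ⊨ τ'`. -/
noncomputable def projTerm (I : ∀ X, D X) (τ' : MvTerm V D) : MvTerm V D where
  lits := fun X =>
    if τ'.lits X = Set.univ then Set.univ else ({I X} : Set (D X))
  nonempty := by
    intro X
    try dsimp only
    split
    · exact ⟨I X, Set.mem_univ _⟩
    · exact ⟨I X, rfl⟩

end Reasons

namespace GSRAux

variable {V : Type} {D : V → Type}

/-- Override `w` by `I` on the set `S`. -/
noncomputable def ovS (w I : ∀ X, D X) (S : Set V) : ∀ Y, D Y :=
  fun Y => if Y ∈ S then I Y else w Y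

lemma ovS_empty (w I : ∀ X, D X) : ovS w I (∅ : Set V) = w := by
  funext Y; simp [ovS]

lemma sat_cond (X : V) (x : D X) (Δ : Form V D) (w : ∀ Y, D Y) :
    Form.sat w (Form.cond X x Δ) ↔ Form.sat (Function.update w X x) Δ := by
  induction Δ with
  | top => simp [Form.cond, Form.sat]
  | bot => simp [Form.cond, Form.sat]
  | lit Y s =>
    by_cases h : X = Y
    · subst h
      by_cases hx : x ∈ s <;> simp [Form.cond, Form.sat, hx]
    · simp [Form.cond, Form.sat, h, Function.update_of_ne (Ne.symm h)]
  | neg φ ih => simp [Form.cond, Form.sat, ih]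
  | and φ ψ ih1 ih2 => simp [Form.cond, Form.sat, ih1, ih2]
  | or φ ψ ih1 ih2 => simp [Form.cond, Form.sat, ih1, ih2]

lemma ovS_update_mem {w I : ∀ X, D X} {S : Set V} {X : V} (hX : X ∈ S) :
    ovS (Function.update w X (I X)) I (S \ {X}) = ovS w I S := by
  funext Y
  by_cases hY : Y ∈ S \ {X}
  · simp [ovS, hY, hY.1]
  · by_cases hYX : Y = X
    · subst hYX; simp [ovS, hY, hX]
    · have hYS : Y ∉ S := fun h => hY ⟨h, hYX⟩
      simp [ovS, hY, hYS, Function.update_of_ne hYX]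

lemma ovS_update_union (w I : ∀ X, D X) (S : Set V) (X : V) :
    ovS (Function.update w X (I X)) I S = ovS w I (S ∪ {X}) := by
  funext Y
  by_cases hY : Y ∈ S
  · simp [ovS, hY]
  · by_cases hYX : Y = X
    · subst hYX; simp [ovS, hY]
    · simp [ovS, hY, hYX, Function.update_of_ne hYX]

lemma sat_selList (I : ∀ X, D X) (L : List V) (Δ : Form V D) (w : ∀ Y, D Y) :
    Form.sat w (Form.selList I L Δ) ↔
      ∀ S : Set V, (∀ Y ∈ S, Y ∈ L) → Form.sat (ovS w I S) Δ := by
  induction L generalizing w with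
  | nil =>
    constructor
    · intro h S hS
      have e : ovS w I S = w := by
        funext Y
        have : Y ∉ S := fun hY => by simpa using hS Y hY
        simp [ovS, this]
      rw [e]; exact h
    · intro h
      have := h ∅ (by simp)
      rwa [ovS_empty] at this
  | cons X L ih =>
    simp only [Form.selList, Form.sel, Form.sat, sat_cond, ih]
    constructor
    · rintro ⟨h1, h2⟩ S hS
      by_cases hX : X ∈ S
      · have := h1 (S \ {X}) (by
          intro Y hY
          have := hS Y hY.1
          simp only [List.mem_cons] at this
          rcases this with h | h
          · exact absurd h hY.2
          · exact h)
        rwa [ovS_update_mem hX] at this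
      · refine h2 S (fun Y hY => ?_)
        have := hS Y hY
        simp only [List.mem_cons] at this
        rcases this with h | h
        · exact absurd (h ▸ hY) hX
        · exact h
    · intro h
      constructor
      · intro S hS
        rw [ovS_update_union]
        refine h (S ∪ {X}) (fun Y hY => ?_)
        rcases hY with hY | hY
        · exact List.mem_cons_of_mem _ (hS Y hY)
        · have hYX : Y = X := hY
          exact hYX ▸ (List.mem_cons_self : X ∈ X :: L)
      · intro S hS
        exact h S (fun Y hY => List.mem_cons_of_mem _ (hS Y hY))

lemma sat_selAll [Fintype V] (I : ∀ X, D X) (Δ : Form V D) (w : ∀ Y, D Y) :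
    Form.sat w (Form.selAll I Δ) ↔ ∀ S : Set V, Form.sat (ovS w I S) Δ := by
  rw [Form.selAll, sat_selList]
  constructor
  · intro h S; exact h S (fun Y _ => by simp [Finset.mem_toList])
  · intro h S _; exact h S

lemma tsat_ovS {I w : ∀ X, D X} {τ : MvTerm V D} (hI : τ.tsat I) (hw : τ.tsat w)
    (S : Set V) : τ.tsat (ovS w I S) := by
  intro X
  by_cases hX : X ∈ S <;> simp [ovS, hX]
  · exact hI X
  · exact hw X

/-- Weaken a term by adding `I`'s state to each literal. -/
noncomputable def widen (I : ∀ X, D X) (τ : MvTerm V D) : MvTerm V D where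
  lits := fun X => τ.lits X ∪ {I X}
  nonempty := fun X => ⟨I X, Or.inr rfl⟩

lemma tsat_widen_I (I : ∀ X, D X) (τ : MvTerm V D) : (widen I τ).tsat I :=
  fun X => Or.inr rfl

lemma termImp_widen (I : ∀ X, D X) (τ : MvTerm V D) : termImp τ (widen I τ) :=
  fun w hw X => Or.inl (hw X)

lemma widen_imp_selAll [Fintype V] {I : ∀ X, D X} {Δ : Form V D} {τ : MvTerm V D}
    (h : ∀ w, τ.tsat w → Form.sat w (Form.selAll I Δ)) :
    ∀ w, (widen I τ).tsat w → Form.sat w (Form.selAll I Δ) := by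
  intro w hw
  classical
  set u : ∀ X, D X := fun X =>
    if w X ∈ τ.lits X then w X else Classical.choose (τ.nonempty X) with hu
  have hut : τ.tsat u := by
    intro X
    by_cases hX : w X ∈ τ.lits X <;> simp [hu, hX]
    exact Classical.choose_spec (τ.nonempty X)
  set T : Set V := {X | w X ∉ τ.lits X} with hT
  have hwu : w = ovS u I T := by
    funext X
    by_cases hX : w X ∈ τ.lits X
    · have : X ∉ T := by simp [hT, hX]
      simp [ovS, this, hu, hX]
    · have hXT : X ∈ T := hX
      have : w X = I X := by
        rcases hw X with h1 | h1
        · exact absurd h1 hX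
        · exact h1
      simp [ovS, hXT, this]
  rw [sat_selAll]
  intro S
  have e : ovS w I S = ovS u I (S ∪ T) := by
    funext X
    by_cases hXS : X ∈ S
    · simp [ovS, hXS, Set.mem_union, hXS]
    · by_cases hXT : X ∈ T
      · have : w X = I X := by
          rcases hw X with h1 | h1
          · exact absurd h1 hXT
          · exact h1
        simp [ovS, hXS, hXT, this]
      · have : X ∉ S ∪ T := by simp [hXS, hXT]
        have hX : w X ∈ τ.lits X := not_not.mp hXT
        simp [ovS, hXS, this, hu, hX]
  rw [e]
  exact (sat_selAll I Δ u).mp (h u hut) (S ∪ T)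

lemma termImp_subset {τ τ' : MvTerm V D} (h : termImp τ τ') (X : V) :
    τ.lits X ⊆ τ'.lits X := by
  intro x hx
  classical
  set w : ∀ Y, D Y :=
    Function.update (fun Y => Classical.choose (τ.nonempty Y)) X x with hw
  have hwt : τ.tsat w := by
    intro Y
    by_cases hY : Y = X
    · subst hY; simp [hw, hx]
    · simp [hw, Function.update_of_ne hY]
      exact Classical.choose_spec (τ.nonempty Y)
  have := h w hwt X
  simpa [hw] using this

lemma mvterm_ext {τ τ' : MvTerm V D} (h : τ.lits = τ'.lits) : τ = τ' := by
  cases τ; cases τ'; cases h; rfl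

lemma termImp_antisymm {τ τ' : MvTerm V D} (h : termImp τ τ') (h' : termImp τ' τ) :
    τ = τ' := by
  refine mvterm_ext (funext fun X => Set.Subset.antisymm ?_ ?_)
  · exact termImp_subset h X
  · exact termImp_subset h' X

lemma imp_selAll_of [Fintype V] {I : ∀ X, D X} {Δ : Form V D} {τ : MvTerm V D}
    (hI : τ.tsat I) (hτ : termImpF τ Δ) :
    ∀ w, τ.tsat w → Form.sat w (Form.selAll I Δ) := by
  intro w hw
  rw [sat_selAll]
  intro S
  exact hτ _ (tsat_ovS hI hw S)

lemma imp_of_selAll [Fintype V] {I : ∀ X, D X} {Δ : Form V D} {τ : MvTerm V D}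
    (h : ∀ w, τ.tsat w → Form.sat w (Form.selAll I Δ)) : termImpF τ Δ := by
  intro w hw
  have := (sat_selAll I Δ w).mp (h w hw) ∅
  rwa [ovS_empty] at this

theorem weakest_iff_prime [Fintype V] (I : ∀ X, D X) (Δ : Form V D) (τ : MvTerm V D) :
    weakestTermFor I Δ τ ↔
      isPrimeImplicantOf (fun w => Form.sat w (Form.selAll I Δ)) τ := by
  constructor
  · rintro ⟨hIτ, hτΔ, hmax⟩
    refine ⟨imp_selAll_of hIτ hτΔ, ?_⟩
    intro τ' hτ' himp
    have hw : ∀ w, (widen I τ').tsat w → Form.sat w (Form.selAll I Δ) :=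
      widen_imp_selAll hτ'
    have heq : widen I τ' = τ :=
      hmax (widen I τ') (tsat_widen_I I τ') (imp_of_selAll hw)
        (fun w h => termImp_widen I τ' w (himp w h))
    refine termImp_antisymm ?_ himp
    intro w h
    exact heq ▸ (termImp_widen I τ' w h)
  · rintro ⟨hτM, hmax⟩
    have hwid : widen I τ = τ :=
      hmax (widen I τ) (widen_imp_selAll hτM) (termImp_widen I τ)
    have hIτ : τ.tsat I := by
      have := tsat_widen_I I τ
      rwa [hwid] at this
    refine ⟨hIτ, imp_of_selAll hτM, ?_⟩
    intro τ' hIτ' hτ'Δ himp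
    exact hmax τ' (imp_selAll_of hIτ' hτ'Δ) himp

end GSRAux

/-- the general sufficient reasons for the decision on instance `I`
in class `Δ` are exactly the variable-minimal prime implicants of the general
reason `⊓I·Δ`. -/
theorem gsr_iff_var_minimal_prime_implicant {V : Type} {D : V → Type}
    [Fintype V] (Δ : Form V D) (I : ∀ X, D X) (hI : Form.sat I Δ)
    (τ : MvTerm V D) :
    isGSR I Δ τ ↔
      (isPrimeImplicantOf (fun w => Form.sat w (Form.selAll I Δ)) τ ∧
        ¬ ∃ τ' : MvTerm V D,
          isPrimeImplicantOf (fun w => Form.sat w (Form.selAll I Δ)) τ' ∧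
          MvTerm.vars τ' ⊂ MvTerm.vars τ) := by
  unfold isGSR
  rw [GSRAux.weakest_iff_prime]
  constructor
  · rintro ⟨h1, h2⟩
    refine ⟨h1, fun ⟨τ', hτ', hsub⟩ => h2 ⟨τ', (GSRAux.weakest_iff_prime I Δ τ').mpr hτ', hsub⟩⟩
  · rintro ⟨h1, h2⟩
    refine ⟨h1, fun ⟨τ', hτ', hsub⟩ => h2 ⟨τ', (GSRAux.weakest_iff_prime I Δ τ').mp hτ', hsub⟩⟩
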